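/- (Marginal Preserving Property, Fokker–Planck form.) Let p : ℝᵏ → (0,∞) be twice continuously differentiable, let b : ℝᵏ → ℝᵏ be a continuously differentiable vector field, and let g, λ ∈ ℝ. Then for every x ∈ ℝᵏ: −div( p(x) · ( b(x) + (g²/2) ∇log p(x) ) ) + ((g² − λ²)/2) Δp(x) = −div( p(x) b(x) ) − (λ²/2) Δp(x). In particular, the left-hand side (the Fokker–Planck right-hand side of the DiffFlow SDE with drift b + (g²/2)∇log p and diffusion coefficient √(g²−λ²)) is independent of g. -/

import Mathlib

open Real

/-- The divergence of a vector field `V : ℝᵏ → ℝᵏ` at `x`: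
`div V (x) = ∑ᵢ ∂ᵢ Vᵢ (x)`. -/
noncomputable def divergence {k : ℕ}
    (V : EuclideanSpace ℝ (Fin k) → EuclideanSpace ℝ (Fin k))
    (x : EuclideanSpace ℝ (Fin k)) : ℝ :=
  ∑ i : Fin k, fderiv ℝ V x (EuclideanSpace.single i 1) i

/-- The Laplacian `Δp = div(∇p)`. -/
noncomputable def laplacian {k : ℕ}
    (p : EuclideanSpace ℝ (Fin k) → ℝ) (x : EuclideanSpace ℝ (Fin k)) : ℝ :=
  divergence (fun y => gradient p y) x

/-- Marginal Preserving Property, Fokker–Planck form: for a twice continuously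
differentiable `p : ℝᵏ → (0,∞)`, a `C¹` vector field `b` and reals `g, λ`,
`−div(p(b + (g²/2)∇log p)) + ((g² − λ²)/2)Δp = −div(p b) − (λ²/2)Δp`;
in particular the Fokker–Planck right-hand side of the DiffFlow SDE is independent of `g`. -/
theorem marginal_preserving_property (k : ℕ)
    (p : EuclideanSpace ℝ (Fin k) → ℝ)
    (b : EuclideanSpace ℝ (Fin k) → EuclideanSpace ℝ (Fin k))
    (hp : ContDiff ℝ 2 p) (hp_pos : ∀ x, 0 < p x)
    (hb : ContDiff ℝ 1 b) (g lam : ℝ) :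
    ∀ x : EuclideanSpace ℝ (Fin k),
      -divergence (fun y =>
          p y • (b y + (g ^ 2 / 2) • gradient (fun z => Real.log (p z)) y)) x
        + ((g ^ 2 - lam ^ 2) / 2) * laplacian p x =
      -divergence (fun y => p y • b y) x - (lam ^ 2 / 2) * laplacian p x := by
  intro x
  set c : ℝ := g ^ 2 / 2 with hc
  have hdp : Differentiable ℝ p := hp.differentiable (by norm_num)
  have hplog : ∀ y, gradient (fun z => Real.log (p z)) y = (p y)⁻¹ • gradient p y := by
    intro y
    have hd : HasFDerivAt p (fderiv ℝ p y) y := (hdp y).hasFDerivAt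
    have hl := hd.log (hp_pos y).ne'
    rw [gradient, hl.fderiv, gradient, map_smul]
  have hveq : (fun y => p y • (b y + c • gradient (fun z => Real.log (p z)) y))
      = fun y => p y • b y + c • gradient p y := by
    funext y
    rw [hplog, smul_add]
    congr 1
    rw [smul_comm, smul_smul, smul_smul, mul_assoc, mul_inv_cancel₀ (hp_pos y).ne', mul_one]
  have hpb : Differentiable ℝ (fun y => p y • b y) :=
    hdp.smul (hb.differentiable one_ne_zero)
  have hgradp : Differentiable ℝ (fun y => gradient p y) := by
    have h1 : ContDiff ℝ 1 (fderiv ℝ p) := hp.fderiv_right (by norm_num)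
    exact (InnerProductSpace.toDual ℝ
      (EuclideanSpace ℝ (Fin k))).symm.differentiable.comp (h1.differentiable one_ne_zero)
  have hfd : fderiv ℝ (fun y => p y • b y + c • gradient p y) x
      = fderiv ℝ (fun y => p y • b y) x + c • fderiv ℝ (fun y => gradient p y) x := by
    rw [fderiv_fun_add (g := fun y => c • gradient p y) (hpb x) ((hgradp x).const_smul c), fderiv_fun_const_smul (hgradp x)]
  have hdiv : divergence (fun y => p y • b y + c • gradient p y) x
      = divergence (fun y => p y • b y) x + c * laplacian p x := by
    unfold laplacian divergence
    rw [hfd, Finset.mul_sum, ← Finset.sum_add_distrib]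
    refine Finset.sum_congr rfl fun i _ => ?_
    simp [PiLp.add_apply, PiLp.smul_apply, smul_eq_mul]
  rw [hveq, hdiv]
  ring
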